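/- The number of cyclic permutations of {1,...,n} that avoid all substrings j(j+1) for 1 ≤ j ≤ n-1 equals D_{n-1}, the (n-1)st derangement number. -/

import Mathlib

set_option linter.unusedSectionVars false

namespace CstarProof

open Equiv Finset


open Equiv

def IsTrans {γ : Type*} (σ : Equiv.Perm γ) : Prop := ∀ a b : γ, ∃ m : ℕ, (σ ^ m) a = b

lemma trans_of_reach {γ : Type*} [Finite γ] (τ : Equiv.Perm γ) (s : γ)
    (h : ∀ b, ∃ m : ℕ, (τ ^ m) s = b) : IsTrans τ := by
  intro a b
  obtain ⟨p, hp⟩ := h a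
  obtain ⟨q, hq⟩ := h b
  have ho : 0 < orderOf τ := orderOf_pos τ
  refine ⟨(orderOf τ - 1) * p + q, ?_⟩
  have h1 : (τ ^ ((orderOf τ - 1) * p)) a = s := by
    rw [← hp, ← Equiv.Perm.mul_apply, ← pow_add]
    have h2 : (orderOf τ - 1) * p + p = orderOf τ * p := by
      rw [Nat.sub_one_mul, Nat.sub_add_cancel (Nat.le_mul_of_pos_left p ho)]
    rw [h2, pow_mul, pow_orderOf_eq_one, one_pow, Equiv.Perm.one_apply]
  rw [add_comm, pow_add, Equiv.Perm.mul_apply, h1, hq]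

variable {β : Type} [DecidableEq β] {y : β}

lemma inv_ne_self {σ : Equiv.Perm β} (hy : σ y ≠ y) : σ⁻¹ y ≠ y :=
  fun hc => hy (by nth_rewrite 1 [← hc]; simp)

def delAux (y : β) (σ : Equiv.Perm β) : Equiv.Perm β := σ * Equiv.swap y (σ⁻¹ y)

lemma delAux_fix (σ : Equiv.Perm β) : delAux y σ y = y := by
  simp [delAux]

lemma delAux_ne_iff (σ : Equiv.Perm β) (z : β) : z ≠ y ↔ delAux y σ z ≠ y := by
  constructor
  · intro hz hc
    have : delAux y σ z = delAux y σ y := by rw [hc, delAux_fix]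
    exact hz ((delAux y σ).injective this)
  · intro h hz; rw [hz] at h; exact h (delAux_fix σ)

lemma delAux_apply_invy (σ : Equiv.Perm β) : delAux y σ (σ⁻¹ y) = σ y := by
  simp [delAux]

lemma delAux_apply_ne (σ : Equiv.Perm β) (z : β) (h0 : z ≠ y) (h : z ≠ σ⁻¹ y) :
    delAux y σ z = σ z := by
  rw [delAux, Equiv.Perm.mul_apply, Equiv.swap_apply_of_ne_of_ne h0 h]

def delPerm (y : β) (σ : Equiv.Perm β) : Equiv.Perm {z : β // z ≠ y} :=
  (delAux y σ).subtypePerm (fun z => (delAux_ne_iff σ z).symm)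

lemma delPerm_coe (σ : Equiv.Perm β) (z : {z : β // z ≠ y}) :
    (delPerm y σ z : β) = delAux y σ z.1 := rfl

def insAux (x : {z : β // z ≠ y}) (σ' : Equiv.Perm {z : β // z ≠ y}) : Equiv.Perm β :=
  (Equiv.Perm.subtypeCongr σ' (1 : Equiv.Perm {z : β // ¬ z ≠ y})) * Equiv.swap y x.1

lemma subtypeCongr_eval (σ' : Equiv.Perm {z : β // z ≠ y}) (z : β) (h : z ≠ y) :
    (Equiv.Perm.subtypeCongr σ' (1 : Equiv.Perm {z : β // ¬ z ≠ y})) z = (σ' ⟨z, h⟩ : β) := by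
  rw [Equiv.Perm.subtypeCongr.apply]
  simp [h]

lemma subtypeCongr_eval_y (σ' : Equiv.Perm {z : β // z ≠ y}) :
    (Equiv.Perm.subtypeCongr σ' (1 : Equiv.Perm {z : β // ¬ z ≠ y})) y = y := by
  rw [Equiv.Perm.subtypeCongr.apply]
  simp

lemma insAux_apply_y (x : {z : β // z ≠ y}) (σ' : Equiv.Perm {z : β // z ≠ y}) :
    insAux x σ' y = (σ' x : β) := by
  rw [insAux, Equiv.Perm.mul_apply, Equiv.swap_apply_left, subtypeCongr_eval σ' x.1 x.2]

lemma insAux_apply_x (x : {z : β // z ≠ y}) (σ' : Equiv.Perm {z : β // z ≠ y}) :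
    insAux x σ' x.1 = y := by
  rw [insAux, Equiv.Perm.mul_apply, Equiv.swap_apply_right, subtypeCongr_eval_y]

lemma insAux_apply_ne (x : {z : β // z ≠ y}) (σ' : Equiv.Perm {z : β // z ≠ y}) (z : β)
    (h1 : z ≠ y) (h2 : z ≠ x.1) :
    insAux x σ' z = (σ' ⟨z, h1⟩ : β) := by
  rw [insAux, Equiv.Perm.mul_apply, Equiv.swap_apply_of_ne_of_ne h1 h2, subtypeCongr_eval σ' z h1]

lemma del_ins (x : {z : β // z ≠ y}) (σ' : Equiv.Perm {z : β // z ≠ y}) :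
    delPerm y (insAux x σ') = σ' := by
  have hinv : (insAux x σ')⁻¹ y = x.1 := by
    rw [Equiv.Perm.inv_eq_iff_eq, insAux_apply_x]
  ext z
  rw [delPerm_coe]
  by_cases h : z.1 = x.1
  · rw [h, ← hinv, delAux_apply_invy, insAux_apply_y]
    exact congrArg _ (congrArg σ' (Subtype.ext h.symm))
  · rw [delAux_apply_ne _ _ z.2 (by rw [hinv]; exact h), insAux_apply_ne _ _ _ z.2 h]

lemma ins_del (σ : Equiv.Perm β) (x : {z : β // z ≠ y}) (hx : (x : β) = σ⁻¹ y) :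
    insAux x (delPerm y σ) = σ := by
  ext z
  by_cases h1 : z = y
  · subst h1
    rw [insAux_apply_y, delPerm_coe, hx, delAux_apply_invy]
  · by_cases h2 : z = x.1
    · rw [h2, insAux_apply_x, hx, ← Equiv.Perm.mul_apply σ σ⁻¹, mul_inv_cancel, Equiv.Perm.one_apply]
    · rw [insAux_apply_ne x _ z h1 h2, delPerm_coe,
        delAux_apply_ne _ _ h1 (by rw [← hx]; exact h2)]


-- new material
omit [DecidableEq β] in
lemma fix_ne [Fintype β] {σ : Equiv.Perm β} (hT : IsTrans σ) (h2 : 1 < Fintype.card β) :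
    σ y ≠ y := by
  intro hc
  obtain ⟨b, hb⟩ := Fintype.exists_ne_of_one_lt_card h2 y
  obtain ⟨m, hm⟩ := hT y b
  apply hb
  rw [← hm]
  clear hm
  induction m with
  | zero => simp
  | succ k ih => rw [pow_succ', Equiv.Perm.mul_apply, ih, hc]

lemma delPerm_pow_coe (σ : Equiv.Perm β) (m : ℕ) (z : {z : β // z ≠ y}) :
    (((delPerm y σ) ^ m) z : β) = ((delAux y σ) ^ m) z.1 := by
  rw [delPerm, Equiv.Perm.subtypePerm_pow]
  rfl

lemma reach_del (σ : Equiv.Perm β) (i : ℕ) (hi : (σ ^ (i+1)) y ≠ y) :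
    ∃ m : ℕ, ((delAux y σ) ^ m) (σ y) = (σ ^ (i+1)) y := by
  induction i with
  | zero => exact ⟨0, by simp⟩
  | succ i ih =>
    by_cases hc : (σ ^ (i+1)) y = y
    · have h0 : (σ ^ (i+1+1)) y = σ y := by rw [pow_succ', Equiv.Perm.mul_apply, hc]
      exact ⟨0, by simp [h0]⟩
    · obtain ⟨m, hm⟩ := ih hc
      refine ⟨m + 1, ?_⟩
      have harg : (σ ^ (i+1)) y ≠ σ⁻¹ y := by
        intro h
        apply hi
        rw [pow_succ', Equiv.Perm.mul_apply, ← Equiv.Perm.mul_apply σ, ← pow_succ', pow_succ',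
          Equiv.Perm.mul_apply, h, ← Equiv.Perm.mul_apply σ σ⁻¹, mul_inv_cancel, Equiv.Perm.one_apply]
      rw [pow_succ', Equiv.Perm.mul_apply, hm, delAux_apply_ne σ _ hc harg,
        ← Equiv.Perm.mul_apply, ← pow_succ']

lemma trans_del [Fintype β] (σ : Equiv.Perm β) (hT : IsTrans σ) (hy : σ y ≠ y) :
    IsTrans (delPerm y σ) := by
  refine trans_of_reach _ ⟨σ y, hy⟩ ?_
  rintro ⟨b, hb⟩
  obtain ⟨j, hj⟩ := hT y b
  rcases j with _ | i
  · exact absurd hj.symm hb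
  · have hne : (σ ^ (i+1)) y ≠ y := by rw [hj]; exact hb
    obtain ⟨m, hm⟩ := reach_del σ i hne
    exact ⟨m, Subtype.ext (by rw [delPerm_pow_coe, hm, hj])⟩

lemma reach_ins (x : {z : β // z ≠ y}) (σ' : Equiv.Perm {z : β // z ≠ y}) (j : ℕ) :
    ∃ m : ℕ, ((insAux x σ') ^ m) y = ((σ' ^ (j+1)) x : β) := by
  induction j with
  | zero => exact ⟨1, by rw [pow_one, pow_one, insAux_apply_y]⟩
  | succ j ih =>
    by_cases hc : (σ' ^ (j+1)) x = x
    · refine ⟨1, ?_⟩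
      rw [pow_one, insAux_apply_y, pow_succ', Equiv.Perm.mul_apply, hc]
    · obtain ⟨m, hm⟩ := ih
      refine ⟨m + 1, ?_⟩
      rw [pow_succ' (insAux x σ'), Equiv.Perm.mul_apply, hm]
      rw [insAux_apply_ne x σ' _ ((σ' ^ (j+1)) x).2 (fun h => hc (Subtype.ext h))]
      simp [pow_succ']

lemma trans_ins [Finite β] (x : {z : β // z ≠ y}) (σ' : Equiv.Perm {z : β // z ≠ y})
    (hT' : IsTrans σ') : IsTrans (insAux x σ') := by
  refine trans_of_reach _ y ?_
  intro b
  by_cases hb : b = y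
  · exact ⟨0, by simp [hb]⟩
  · obtain ⟨j0, hj0⟩ := hT' x ⟨b, hb⟩
    have : ∃ j : ℕ, (σ' ^ (j+1)) x = ⟨b, hb⟩ := by
      rcases j0 with _ | j
      · have ho : 0 < orderOf σ' := by
          have : Finite {z : β // z ≠ y} := inferInstance
          exact orderOf_pos σ'
        refine ⟨orderOf σ' - 1, ?_⟩
        rw [Nat.sub_add_cancel ho, pow_orderOf_eq_one]
        exact hj0
      · exact ⟨j, hj0⟩
    obtain ⟨j, hj⟩ := this
    obtain ⟨m, hm⟩ := reach_ins x σ' j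
    exact ⟨m, by rw [hm, hj]⟩


-- stage 3
def Forced (f : β → Option β) (σ : Equiv.Perm β) : Prop :=
  ∀ a b : β, f a = some b → σ a = b

def omap (y : β) : Option β → Option {z : β // z ≠ y}
  | none => none
  | some w => if h : w = y then none else some ⟨w, h⟩

lemma omap_eq_some (o : Option β) (b : {z : β // z ≠ y}) :
    omap y o = some b ↔ o = some b.1 := by
  cases o with
  | none => simp [omap]
  | some w =>
    simp only [omap]
    by_cases h : w = y
    · rw [dif_pos h]
      constructor
      · intro hc; exact absurd hc (by simp)
      · intro hc
        exact absurd (by rw [← Option.some_inj.mp hc]; exact h) b.2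
    · rw [dif_neg h]
      constructor
      · intro hc
        rw [← Option.some_inj.mp hc]
      · intro hc
        congr 1
        exact Subtype.ext (Option.some_inj.mp hc)

lemma omap_isSome (o : Option β) (hne : ∀ w, o = some w → w ≠ y) :
    (omap y o).isSome ↔ o.isSome := by
  cases o with
  | none => simp [omap]
  | some w => simp [omap, dif_neg (hne w rfl)]

def fdel (x : {z : β // z ≠ y}) (f : β → Option β) :
    {z : β // z ≠ y} → Option {z : β // z ≠ y} :=
  fun z => if z = x then omap y (f y) else omap y (f z.1)

noncomputable def equivProd [Fintype β] (y : β) (h2 : 1 < Fintype.card β) :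
    {σ : Equiv.Perm β // IsTrans σ} ≃
      {z : β // z ≠ y} × {σ' : Equiv.Perm {z : β // z ≠ y} // IsTrans σ'} where
  toFun σ := (⟨σ.1⁻¹ y, inv_ne_self (fix_ne σ.2 h2)⟩,
    ⟨delPerm y σ.1, trans_del σ.1 σ.2 (fix_ne σ.2 h2)⟩)
  invFun p := ⟨insAux p.1 p.2.1, trans_ins p.1 p.2.1 p.2.2⟩
  left_inv σ := Subtype.ext (ins_del σ.1 _ rfl)
  right_inv p := by
    refine Prod.ext (Subtype.ext ?_) (Subtype.ext (del_ins p.1 p.2.1))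
    show (insAux p.1 p.2.1)⁻¹ y = p.1.1
    rw [Equiv.Perm.inv_eq_iff_eq, insAux_apply_x]

noncomputable def equivForced [Fintype β] (h2 : 1 < Fintype.card β) (f : β → Option β)
    (x : {z : β // z ≠ y}) (hx : f x.1 = some y)
    (hinj : ∀ a b c : β, f a = some c → f b = some c → a = b)
    (hyy : ∀ w, f y = some w → w ≠ y) :
    {σ : Equiv.Perm β // IsTrans σ ∧ Forced f σ} ≃
      {σ' : Equiv.Perm {z : β // z ≠ y} // IsTrans σ' ∧ Forced (fdel x f) σ'} where
  toFun σ := ⟨delPerm y σ.1, trans_del σ.1 σ.2.1 (fix_ne σ.2.1 h2), by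
    intro a b hab
    by_cases ha : a = x
    · subst ha
      rw [fdel, if_pos rfl, omap_eq_some] at hab
      have h1 : σ.1 y = b.1 := σ.2.2 y b.1 hab
      have h2 : (a : β) = σ.1⁻¹ y := by
        rw [Equiv.Perm.eq_inv_iff_eq]
        exact σ.2.2 a.1 y hx
      exact Subtype.ext (by rw [delPerm_coe, h2, delAux_apply_invy, h1])
    · rw [fdel, if_neg ha, omap_eq_some] at hab
      have h1 : σ.1 a.1 = b.1 := σ.2.2 a.1 b.1 hab
      have h3 : a.1 ≠ σ.1⁻¹ y := by
        intro hc
        apply b.2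
        rw [← h1, hc, ← Equiv.Perm.mul_apply σ.1 σ.1⁻¹, mul_inv_cancel, Equiv.Perm.one_apply]
      exact Subtype.ext (by rw [delPerm_coe, delAux_apply_ne _ _ a.2 h3, h1])⟩
  invFun σ' := ⟨insAux x σ'.1, trans_ins x σ'.1 σ'.2.1, by
    intro a b hab
    by_cases ha : a = x.1
    · subst ha
      rw [hx] at hab
      rw [Option.some_inj.mp hab.symm, insAux_apply_x]
    · by_cases hay : a = y
      · have hab' : f y = some b := by rw [← hay]; exact hab
        have hb : b ≠ y := hyy b hab'
        have : fdel x f x = some ⟨b, hb⟩ := by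
          rw [fdel, if_pos rfl, omap_eq_some]
          exact hab'
        have h1 := σ'.2.2 x ⟨b, hb⟩ this
        rw [hay, insAux_apply_y, h1]
      · have hb : b ≠ y := by
          intro hc
          exact ha (hinj a x.1 y (hc ▸ hab) hx)
        have hne : (⟨a, hay⟩ : {z : β // z ≠ y}) ≠ x := fun hc => ha (congrArg Subtype.val hc)
        have : fdel x f ⟨a, hay⟩ = some ⟨b, hb⟩ := by
          rw [fdel, if_neg hne, omap_eq_some]
          exact hab
        have h1 := σ'.2.2 _ _ this
        rw [insAux_apply_ne x σ'.1 a hay ha, h1]⟩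
  left_inv σ := Subtype.ext (ins_del σ.1 x (by
    rw [Equiv.Perm.eq_inv_iff_eq]
    exact σ.2.2 x.1 y hx))
  right_inv σ' := Subtype.ext (del_ins x σ'.1)

lemma card_fdel [Fintype β] (f : β → Option β) (x : {z : β // z ≠ y}) (hx : f x.1 = some y)
    (hinj : ∀ a b c : β, f a = some c → f b = some c → a = b)
    (hyy : ∀ w, f y = some w → w ≠ y) :
    (Finset.univ.filter (fun a : β => (f a).isSome)).card =
      (Finset.univ.filter (fun z : {z : β // z ≠ y} => ((fdel x f) z).isSome)).card + 1 := by
  classical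
  have hmem : ∀ z : {z : β // z ≠ y}, ((fdel x f) z).isSome ↔
      (f (if z = x then y else z.1)).isSome := by
    intro z
    by_cases hz : z = x
    · rw [fdel, if_pos hz, if_pos hz]
      exact omap_isSome _ hyy
    · rw [fdel, if_neg hz, if_neg hz]
      refine omap_isSome _ ?_
      intro w hw hc
      rw [hc] at hw
      exact hz (Subtype.ext (hinj z.1 x.1 y hw hx))
  have key : (Finset.univ.filter (fun z : {z : β // z ≠ y} => ((fdel x f) z).isSome)).card
      = ((Finset.univ.filter (fun a : β => (f a).isSome)).erase x.1).card := by
    apply Finset.card_bij' (fun z _ => if z = x then y else z.1)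
      (fun a ha => if h : a = y then x else ⟨a, h⟩)
    · intro z hz
      rw [Finset.mem_filter] at hz
      rw [Finset.mem_erase, Finset.mem_filter]
      refine ⟨?_, Finset.mem_univ _, (hmem z).mp hz.2⟩
      by_cases h : z = x
      · rw [if_pos h]; exact fun hc => x.2 hc.symm
      · rw [if_neg h]; exact fun hc => h (Subtype.ext hc)
    · intro a ha
      rw [Finset.mem_erase, Finset.mem_filter] at ha
      rw [Finset.mem_filter]
      refine ⟨Finset.mem_univ _, ?_⟩
      by_cases h : a = y
      · rw [dif_pos h, hmem, if_pos rfl, ← h]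
        exact ha.2.2
      · rw [dif_neg h, hmem]
        have : (⟨a, h⟩ : {z : β // z ≠ y}) ≠ x := fun hc => ha.1 (congrArg Subtype.val hc)
        rw [if_neg this]
        exact ha.2.2
    · intro z hz
      by_cases h : z = x
      · rw [if_pos h, dif_pos rfl, h]
      · rw [if_neg h, dif_neg z.2]
    · intro a ha
      rw [Finset.mem_erase, Finset.mem_filter] at ha
      by_cases h : a = y
      · rw [dif_pos h, if_pos rfl, h]
      · rw [dif_neg h]
        have : (⟨a, h⟩ : {z : β // z ≠ y}) ≠ x := fun hc => ha.1 (congrArg Subtype.val hc)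
        rw [if_neg this]
  have hxm : x.1 ∈ Finset.univ.filter (fun a : β => (f a).isSome) := by
    rw [Finset.mem_filter]
    exact ⟨Finset.mem_univ _, by rw [hx]; rfl⟩
  rw [key, Finset.card_erase_of_mem hxm, Nat.sub_add_cancel]
  exact Finset.card_pos.mpr ⟨x.1, hxm⟩



lemma fdel_eq_some (x : {z : β // z ≠ y}) (f : β → Option β)
    (z b : {z : β // z ≠ y}) : fdel x f z = some b ↔ f (if z = x then y else z.1) = some b.1 := by
  by_cases hz : z = x
  · rw [fdel, if_pos hz, if_pos hz]
    exact omap_eq_some _ _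
  · rw [fdel, if_neg hz, if_neg hz]
    exact omap_eq_some _ _

-- stage 4
lemma card_ne (β : Type) [Fintype β] [DecidableEq β] (y : β) :
    Fintype.card {z : β // z ≠ y} = Fintype.card β - 1 := by
  simp [Fintype.card_subtype_compl, Fintype.card_subtype_eq]

lemma count_main (N : ℕ) : ∀ (β : Type) (_ : Fintype β) (_ : DecidableEq β)
    (f : β → Option β) (r : β → ℕ), Fintype.card β = N →
    (∀ a b c : β, f a = some c → f b = some c → a = b) →
    (∀ a b : β, f a = some b → r a < r b) →
    Nat.card {σ : Equiv.Perm β // IsTrans σ ∧ Forced f σ} =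
      Nat.factorial (N - 1 - (Finset.univ.filter (fun a : β => (f a).isSome)).card) := by
  induction N using Nat.strong_induction_on with
  | _ N IH =>
    intro β hFin hDec f r hcard hinj hr
    by_cases hD : (Finset.univ.filter (fun a : β => (f a).isSome)) = ∅
    · -- no forced edges
      have hf : ∀ a : β, f a = none := by
        intro a
        by_contra hc
        have : a ∈ Finset.univ.filter (fun a : β => (f a).isSome) := by
          rw [Finset.mem_filter]
          exact ⟨Finset.mem_univ _, Option.ne_none_iff_isSome.mp hc⟩
        rw [hD] at this
        exact absurd this (Finset.notMem_empty a)
      have hFtriv : ∀ σ : Equiv.Perm β, Forced f σ := by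
        intro σ a b hab
        rw [hf a] at hab
        exact absurd hab (by simp)
      rw [hD, Finset.card_empty]
      rcases Nat.lt_or_ge N 2 with hN | hN
      · -- N ≤ 1 : all of Perm β qualifies, and Perm β is a subsingleton
        have hsub : Subsingleton β := by
          rw [← Fintype.card_le_one_iff_subsingleton, hcard]
          omega
        have hT : ∀ σ : Equiv.Perm β, IsTrans σ := by
          intro σ a b
          exact ⟨0, by rw [pow_zero]; exact Subsingleton.elim _ _⟩
        have e : {σ : Equiv.Perm β // IsTrans σ ∧ Forced f σ} ≃ Equiv.Perm β :=
          Equiv.subtypeUnivEquiv (fun σ => ⟨hT σ, hFtriv σ⟩)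
        rw [Nat.card_congr e, Nat.card_eq_fintype_card, Fintype.card_perm, hcard]
        interval_cases N <;> rfl
      · -- N ≥ 2, no forced edges
        have hne : Nonempty β := by
          rw [← Fintype.card_pos_iff, hcard]; omega
        obtain ⟨y⟩ := hne
        have h2 : 1 < Fintype.card β := by omega
        have e1 : {σ : Equiv.Perm β // IsTrans σ ∧ Forced f σ} ≃
            {σ : Equiv.Perm β // IsTrans σ} :=
          Equiv.subtypeEquivRight (fun σ => by
            constructor
            · exact fun h => h.1
            · exact fun h => ⟨h, hFtriv σ⟩)
        have e3 : {σ' : Equiv.Perm {z : β // z ≠ y} // IsTrans σ'} ≃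
            {σ' : Equiv.Perm {z : β // z ≠ y} // IsTrans σ' ∧
              Forced (fun _ => none) σ'} :=
          Equiv.subtypeEquivRight (fun σ => by
            constructor
            · exact fun h => ⟨h, fun a b hab => absurd hab (by simp)⟩
            · exact fun h => h.1)
        rw [Nat.card_congr ((e1.trans (equivProd y h2)).trans (Equiv.prodCongr
          (Equiv.refl _) e3))]
        rw [Nat.card_prod, Nat.card_eq_fintype_card, card_ne, hcard]
        have hcard' : Fintype.card {z : β // z ≠ y} = N - 1 := by rw [card_ne, hcard]
        rw [IH (N-1) (by omega) _ inferInstance inferInstance (fun _ => none) (fun _ => 0) hcard'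
          (fun a b c hab => absurd hab (by simp)) (fun a b hab => absurd hab (by simp))]
        have hfilter : (Finset.univ.filter
            (fun _ : {z : β // z ≠ y} => (Option.isSome (α := {z : β // z ≠ y}) none))) = ∅ := by
          simp
        rw [hfilter, Finset.card_empty, Nat.sub_zero]
        have : N - 1 = (N - 1 - 1) + 1 := by omega
        rw [this]
        simp [Nat.factorial_succ]
    · -- there is a forced edge
      obtain ⟨x0, hx0⟩ := Finset.nonempty_iff_ne_empty.mpr hD
      rw [Finset.mem_filter] at hx0
      obtain ⟨w, hw⟩ := Option.isSome_iff_exists.mp hx0.2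
      have hxw : x0 ≠ w := fun hc => Nat.lt_irrefl _ (hc ▸ hr x0 w hw)
      set y := w with hy
      have h2 : 1 < Fintype.card β := Fintype.one_lt_card_iff_nontrivial.mpr ⟨x0, y, hxw⟩
      have hN2 : 2 ≤ N := by omega
      set x : {z : β // z ≠ y} := ⟨x0, hxw⟩ with hxdef
      have hyy : ∀ v, f y = some v → v ≠ y := by
        intro v hv hc
        rw [hc] at hv
        exact Nat.lt_irrefl _ (hr y y hv)
      rw [Nat.card_congr (equivForced h2 f x hw hinj hyy)]
      have hcard' : Fintype.card {z : β // z ≠ y} = N - 1 := by rw [card_ne, hcard]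
      have hinj' : ∀ a b c : {z : β // z ≠ y}, fdel x f a = some c → fdel x f b = some c →
          a = b := by
        intro a b c ha hb
        rw [fdel_eq_some] at ha hb
        have := hinj _ _ _ ha hb
        by_cases h1 : a = x <;> by_cases h2' : b = x
        · rw [h1, h2']
        · rw [if_pos h1, if_neg h2'] at this
          exact absurd this.symm b.2
        · rw [if_neg h1, if_pos h2'] at this
          exact absurd this a.2
        · rw [if_neg h1, if_neg h2'] at this
          exact Subtype.ext this
      have hr' : ∀ a b : {z : β // z ≠ y}, fdel x f a = some b → r a.1 < r b.1 := by
        intro a b ha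
        rw [fdel_eq_some] at ha
        by_cases h1 : a = x
        · rw [if_pos h1] at ha
          calc r a.1 < r y := by rw [h1]; exact hr x0 y hw
            _ < r b.1 := hr y b.1 ha
        · rw [if_neg h1] at ha
          exact hr a.1 b.1 ha
      rw [IH (N-1) (by omega) _ inferInstance inferInstance (fdel x f) (fun z => r z.1) hcard' hinj' hr']
      have hcf := card_fdel f x hw hinj hyy
      congr 1
      omega

-- stage 5
lemma mem_finset_inf {α ι : Type*} [DecidableEq α] [Fintype α] (s : Finset ι)
    (f : ι → Finset α) (a : α) : a ∈ s.inf f ↔ ∀ i ∈ s, a ∈ f i := by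
  induction s using Finset.cons_induction with
  | empty => simp [Finset.inf_empty, Finset.top_eq_univ]
  | cons i s hi ih => simp [Finset.inf_cons, Finset.inf_eq_inter, ih]

lemma nat_aux (m k : ℕ) (hk : k ≤ m) :
    m.choose k * Nat.factorial (m - k) = Nat.ascFactorial (k + 1) (m - k) := by
  have h1 := Nat.choose_mul_factorial_mul_factorial hk
  have h2 := Nat.factorial_mul_ascFactorial k (m - k)
  rw [Nat.add_sub_cancel' hk] at h2
  apply Nat.eq_of_mul_eq_mul_left (Nat.factorial_pos k)
  calc Nat.factorial k * (m.choose k * Nat.factorial (m - k))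
      = m.choose k * Nat.factorial k * Nat.factorial (m - k) := by ring
    _ = Nat.factorial m := h1
    _ = Nat.factorial k * Nat.ascFactorial (k + 1) (m - k) := h2.symm


end CstarProof

open CstarProof in
/-- The number of cyclic permutations of `{1,...,n}` avoiding all substrings `j(j+1)`,
`1 ≤ j ≤ n-1`, equals the `(n-1)`-st derangement number. Values 0-indexed; a cyclic
permutation is a single-orbit permutation `σ`, and it contains substring `ab` iff `σ a = b`. -/
theorem cstar_n_eq_derangements (n : ℕ) :
    Nat.card {σ : Equiv.Perm (Fin n) //
        (∀ a b : Fin n, ∃ m : ℕ, (σ ^ m) a = b) ∧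
        ∀ a : Fin n, ((σ a : ℕ)) ≠ (a : ℕ) + 1} =
      numDerangements (n - 1) := by
  classical
  rcases Nat.eq_zero_or_pos n with hn | hn
  · subst hn
    have htriv : ∀ σ : Equiv.Perm (Fin 0), (∀ a b : Fin 0, ∃ m : ℕ, (σ ^ m) a = b) ∧
        ∀ a : Fin 0, ((σ a : ℕ)) ≠ (a : ℕ) + 1 := fun σ => ⟨fun a => a.elim0, fun a => a.elim0⟩
    rw [Nat.card_congr (Equiv.subtypeUnivEquiv htriv), Nat.card_eq_fintype_card,
      Fintype.card_perm]
    rfl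
  · set lst : Fin n := ⟨n - 1, by omega⟩ with hlst
    set s : Finset (Fin n) := Finset.univ.erase lst with hs
    set S : Fin n → Finset (Equiv.Perm (Fin n)) :=
      fun j => Finset.univ.filter (fun σ => ((σ j : ℕ) = (j : ℕ) + 1)) with hS
    have hscard : s.card = n - 1 := by
      rw [hs, Finset.card_erase_of_mem (Finset.mem_univ _), Finset.card_univ, Fintype.card_fin]
    -- step A : identify LHS with a filter over the inf of complements
    have stepA : Nat.card {σ : Equiv.Perm (Fin n) //
        (∀ a b : Fin n, ∃ m : ℕ, (σ ^ m) a = b) ∧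
        ∀ a : Fin n, ((σ a : ℕ)) ≠ (a : ℕ) + 1} =
        ((s.inf fun j => (S j)ᶜ).filter (fun σ => IsTrans σ)).card := by
      rw [Nat.card_eq_fintype_card, Fintype.card_subtype]
      congr 1
      ext σ
      rw [Finset.mem_filter, Finset.mem_filter, mem_finset_inf]
      constructor
      · rintro ⟨-, hT, hA⟩
        refine ⟨fun i hi => ?_, hT⟩
        rw [Finset.mem_compl, hS, Finset.mem_filter]
        exact fun hc => hA i hc.2
      · rintro ⟨h1, hT⟩
        refine ⟨Finset.mem_univ _, hT, ?_⟩
        intro a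
        by_cases ha : a ∈ s
        · have := h1 a ha
          rw [Finset.mem_compl, hS, Finset.mem_filter] at this
          exact fun hc => this ⟨Finset.mem_univ _, hc⟩
        · have : a = lst := by
            by_contra hc
            exact ha (Finset.mem_erase.mpr ⟨hc, Finset.mem_univ _⟩)
          subst this
          have h2 : ((σ lst : ℕ)) < n := (σ lst).2
          have h3 : ((lst : ℕ)) + 1 = n := by
            show (n - 1) + 1 = n
            omega
          omega
    -- step C : inner counting
    have stepC : ∀ t ∈ s.powerset,
        (((t.inf S).filter (fun σ => IsTrans σ)).card : ℤ) =
          (Nat.factorial (n - 1 - t.card) : ℤ) := by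
      intro t ht
      rw [Finset.mem_powerset] at ht
      congr 1
      set ft : Fin n → Option (Fin n) := fun a =>
        if a ∈ t then (if h : (a : ℕ) + 1 < n then some ⟨(a : ℕ) + 1, h⟩ else none)
        else none with hft
      have hlt : ∀ a ∈ t, (a : ℕ) + 1 < n := by
        intro a hat
        have has := ht hat
        rw [hs, Finset.mem_erase] at has
        have : (a : ℕ) ≠ n - 1 := fun hc => has.1 (Fin.ext hc)
        have := a.2
        omega
      have hft_some : ∀ a (hat : a ∈ t), ft a = some ⟨(a : ℕ) + 1, hlt a hat⟩ := by
        intro a hat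
        simp only [hft, if_pos hat]
        rw [dif_pos (hlt a hat)]
      have hmem : ∀ σ : Equiv.Perm (Fin n), σ ∈ t.inf S ↔ Forced ft σ := by
        intro σ
        rw [mem_finset_inf]
        constructor
        · intro h a b hab
          by_cases hat : a ∈ t
          · have h2 := h a hat
            rw [hS, Finset.mem_filter] at h2
            rw [hft_some a hat] at hab
            rw [← Option.some_inj.mp hab]
            exact Fin.ext h2.2
          · simp [hft, if_neg hat] at hab
        · intro h a hat
          rw [hS, Finset.mem_filter]
          refine ⟨Finset.mem_univ _, ?_⟩
          have := h a ⟨(a : ℕ) + 1, hlt a hat⟩ (hft_some a hat)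
          rw [this]
      have hfilter_eq : (t.inf S).filter (fun σ => IsTrans σ) =
          Finset.univ.filter (fun σ => IsTrans σ ∧ Forced ft σ) := by
        ext σ
        rw [Finset.mem_filter, Finset.mem_filter, hmem σ]
        constructor
        · rintro ⟨h1, h2⟩; exact ⟨Finset.mem_univ _, h2, h1⟩
        · rintro ⟨-, h1, h2⟩; exact ⟨h2, h1⟩
      have hDcard : (Finset.univ.filter (fun a : Fin n => (ft a).isSome)).card = t.card := by
        congr 1
        ext a
        rw [Finset.mem_filter]
        constructor
        · rintro ⟨-, h1⟩
          by_contra hat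
          simp [hft, if_neg hat] at h1
        · intro hat
          refine ⟨Finset.mem_univ _, ?_⟩
          rw [hft_some a hat]
          rfl
      have hinj : ∀ a b c : Fin n, ft a = some c → ft b = some c → a = b := by
        intro a b c ha hb
        have hva : (a : ℕ) + 1 = (c : ℕ) := by
          by_cases hat : a ∈ t
          · rw [hft_some a hat] at ha
            rw [← Option.some_inj.mp ha]
          · simp [hft, if_neg hat] at ha
        have hvb : (b : ℕ) + 1 = (c : ℕ) := by
          by_cases hbt : b ∈ t
          · rw [hft_some b hbt] at hb
            rw [← Option.some_inj.mp hb]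
          · simp [hft, if_neg hbt] at hb
        exact Fin.ext (by omega)
      have hr : ∀ a b : Fin n, ft a = some b → (a : ℕ) < (b : ℕ) := by
        intro a b hab
        by_cases hat : a ∈ t
        · rw [hft_some a hat] at hab
          rw [← Option.some_inj.mp hab]
          simp
        · simp [hft, if_neg hat] at hab
      rw [hfilter_eq, ← Fintype.card_subtype, ← Nat.card_eq_fintype_card,
        count_main n (Fin n) inferInstance inferInstance ft (fun a => (a : ℕ))
          (Fintype.card_fin n) hinj hr, hDcard]
    -- step B : inclusion-exclusion
    have stepB := Finset.inclusion_exclusion_sum_inf_compl s S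
      (fun σ => if IsTrans σ then (1 : ℤ) else 0)
    rw [Finset.sum_boole] at stepB
    have hL : (((s.inf fun j => (S j)ᶜ).filter (fun σ => IsTrans σ)).card : ℤ) =
        ∑ t ∈ s.powerset, (-1 : ℤ) ^ t.card • ∑ σ ∈ t.inf S, (if IsTrans σ then (1 : ℤ) else 0) := stepB
    have hR : ∀ t ∈ s.powerset,
        (-1 : ℤ) ^ t.card • ∑ σ ∈ t.inf S, (if IsTrans σ then (1 : ℤ) else 0) =
        (-1 : ℤ) ^ t.card * (Nat.factorial (n - 1 - t.card) : ℤ) := by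
      intro t ht
      rw [Finset.sum_boole, smul_eq_mul, stepC t ht]
    rw [Finset.sum_congr rfl hR] at hL
    -- step D : group by cardinality
    erw [Finset.powerset_card_disjiUnion, Finset.sum_disjiUnion] at hL
    have hD : ∀ k ∈ Finset.range (s.card + 1),
        ∑ t ∈ Finset.powersetCard k s, (-1 : ℤ) ^ t.card * (Nat.factorial (n - 1 - t.card) : ℤ)
        = (-1 : ℤ) ^ k * ((n - 1).choose k * Nat.factorial (n - 1 - k) : ℕ) := by
      intro k hk
      rw [Finset.mem_range] at hk
      have : ∀ t ∈ Finset.powersetCard k s,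
          (-1 : ℤ) ^ t.card * (Nat.factorial (n - 1 - t.card) : ℤ) =
          (-1 : ℤ) ^ k * (Nat.factorial (n - 1 - k) : ℤ) := by
        intro t htk
        rw [(Finset.mem_powersetCard.mp htk).2]
      rw [Finset.sum_congr rfl this, Finset.sum_const, Finset.card_powersetCard, hscard]
      push_cast
      ring
    rw [Finset.sum_congr rfl hD, hscard] at hL
    -- step E : compare with numDerangements
    have hE := numDerangements_sum (n - 1)
    have hterm : ∀ k ∈ Finset.range ((n - 1) + 1),
        (-1 : ℤ) ^ k * ((n - 1).choose k * Nat.factorial (n - 1 - k) : ℕ) =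
        (-1 : ℤ) ^ k * (Nat.ascFactorial (k + 1) ((n - 1) - k) : ℕ) := by
      intro k hk
      rw [Finset.mem_range] at hk
      rw [nat_aux (n - 1) k (by omega)]
    rw [Finset.sum_congr rfl hterm, ← hE] at hL
    rw [stepA]
    exact_mod_cast hL
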